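/- Let X be a CAT(−1) space, c ∈ GX, and c₁, c₂ ∈ W^uu(c) two geodesics in the same strong unstable set. Then there exists a universal constant C (independent of c, c₁, c₂) such that d_{GX}(c₁, c₂) ≤ C d⁺(c₁, c₂), where d⁺ is the Hamenstädt metric d⁺(c₁,c₂) = exp( lim_{t→∞} ½ d(c₁(t), c₂(t)) − t ). -/

import Mathlib

open MeasureTheory

/-- `γ : ℝ → X` is a geodesic segment from `x` to `y`, parametrized by arclength on
`[0, dist x y]`. -/
def IsGeodesicSegment {X : Type*} [MetricSpace X] (γ : ℝ → X) (x y : X) : Prop :=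
  γ 0 = x ∧ γ (dist x y) = y ∧
    ∀ s ∈ Set.Icc (0 : ℝ) (dist x y), ∀ t ∈ Set.Icc (0 : ℝ) (dist x y),
      dist (γ s) (γ t) = |s - t|

/-- A geodesic metric space: any two points are joined by a geodesic segment. -/
def GeodesicSpace (X : Type*) [MetricSpace X] : Prop :=
  ∀ x y : X, ∃ γ : ℝ → X, IsGeodesicSegment γ x y

/-- Geodesic completeness (for the spaces considered here): any two points lie on a
common geodesic line, i.e. every geodesic segment extends to an isometric embedding of `ℝ`. -/
def GeodesicallyComplete (X : Type*) [MetricSpace X] : Prop :=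
  ∀ x y : X, ∃ c : ℝ → X, Isometry c ∧ c 0 = x ∧ c (dist x y) = y

/-- `X` is CAT(−1): geodesic triangles are at least as thin as comparison triangles in the
hyperbolic plane `ℍ` (the upper half-plane with its hyperbolic metric). Given a triangle
`x y z` with sides `γ₁ : x → y`, `γ₂ : x → z`, a comparison triangle `x' y' z'` in `ℍ`
with the same side lengths, and comparison points `p` on `[x', y']` and `q` on `[x', z']`
at parameters `s`, `t`, we have `dist (γ₁ s) (γ₂ t) ≤ dist p q`. -/
def CATMinusOne (X : Type*) [MetricSpace X] : Prop :=
  ∀ (x y z : X) (γ₁ γ₂ : ℝ → X), IsGeodesicSegment γ₁ x y → IsGeodesicSegment γ₂ x z →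
    ∀ x' y' z' : UpperHalfPlane,
      dist x' y' = dist x y → dist x' z' = dist x z → dist y' z' = dist y z →
      ∀ s ∈ Set.Icc (0 : ℝ) (dist x y), ∀ t ∈ Set.Icc (0 : ℝ) (dist x z),
        ∀ p q : UpperHalfPlane,
          dist x' p = s → dist p y' = dist x y - s →
          dist x' q = t → dist q z' = dist x z - t →
          dist (γ₁ s) (γ₂ t) ≤ dist p q

/-- The distance on the space `GX` of geodesic lines:
`d_{GX}(c, c') = ∫ d(c(s), c'(s)) e^{−2|s|} ds`. -/
noncomputable def dGX {X : Type*} [MetricSpace X] (c c' : ℝ → X) : ℝ :=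
  ∫ s : ℝ, dist (c s) (c' s) * Real.exp (-2 * |s|)

/-- The geodesic flow `(g_t c)(s) = c(t + s)`. -/
def geodFlow {X : Type*} (t : ℝ) (c : ℝ → X) : ℝ → X := fun s => c (t + s)

/-- The ergodic integral `Φ(c, t) = ∫₀ᵗ φ(g_s c) ds`. -/
noncomputable def ergInt {X : Type*} (φ : (ℝ → X) → ℝ) (c : ℝ → X) (t : ℝ) : ℝ :=
  ∫ s in (0 : ℝ)..t, φ (geodFlow s c)

/-- `φ` has the Bowen property on `GX`: there are `ε > 0` and `C` such that any two
geodesic lines staying `ε`-close (in `d_{GX}`) along a time interval `[0, t]` have ergodic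
integrals over `[0, t]` differing by at most `C`. -/
def BowenProperty {X : Type*} [MetricSpace X] (φ : (ℝ → X) → ℝ) : Prop :=
  ∃ ε > (0 : ℝ), ∃ C : ℝ, ∀ c c' : ℝ → X, Isometry c → Isometry c' →
    ∀ t ≥ (0 : ℝ), (∀ s ∈ Set.Icc (0 : ℝ) t, dGX (geodFlow s c) (geodFlow s c') ≤ ε) →
      |ergInt φ c t - ergInt φ c' t| ≤ C

/-- The weight function `φ̄(x, y)`: the supremum of `∫₀^{d(x,y)} φ(g_t c) dt` over all
geodesic lines `c` with `c(0) = x` and `c(d(x,y)) = y` (extensions of the segment `[x,y]`). -/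
noncomputable def barPhi {X : Type*} [MetricSpace X] (φ : (ℝ → X) → ℝ) (x y : X) : ℝ :=
  sSup ((fun c : ℝ → X => ergInt φ c (dist x y)) ''
    {c : ℝ → X | Isometry c ∧ c 0 = x ∧ c (dist x y) = y})

namespace Stmt14Aux
open Real

/-! ### Elementary hyperbolic function estimates -/

lemma sinh_le_half_exp {x : ℝ} (hx : 0 ≤ x) : Real.sinh x ≤ Real.exp x / 2 := by
  rw [Real.sinh_eq]
  have := Real.exp_pos (-x)
  linarith

lemma quarter_exp_le_sinh {x : ℝ} (hx : 1 ≤ x) : Real.exp x / 4 ≤ Real.sinh x := by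
  rw [Real.sinh_eq]
  have h1 : Real.exp (-x) * Real.exp x = 1 := by rw [← Real.exp_add]; simp
  have h2 : (2:ℝ) ≤ Real.exp x := by
    have := Real.add_one_le_exp x; linarith
  nlinarith [Real.exp_pos (-x), Real.exp_pos x]

lemma sinh_le_self_mul_exp {x : ℝ} (hx : 0 ≤ x) : Real.sinh x ≤ x * Real.exp x := by
  rw [Real.sinh_eq]
  have h1 : -(2*x) + 1 ≤ Real.exp (-(2*x)) := Real.add_one_le_exp _
  have h2 : Real.exp (-x) = Real.exp x * Real.exp (-(2*x)) := by
    rw [← Real.exp_add]; ring_nf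
  have h3 := mul_le_mul_of_nonneg_left h1 (Real.exp_pos x).le
  nlinarith [Real.exp_pos x]

lemma cosh_eq_two_sinh_half_sq (x : ℝ) : Real.cosh x = 2 * Real.sinh (x/2)^2 + 1 := by
  have h0 : x = 2*(x/2) := by ring
  rw [h0, Real.cosh_two_mul, Real.cosh_sq]
  ring_nf

lemma sq_le_two_mul_cosh_sub_one (y : ℝ) : y^2 ≤ 2*(Real.cosh y - 1) := by
  have key : ∀ x : ℝ, 0 ≤ x → x^2 ≤ 2*(Real.cosh x - 1) := by
    intro x hx
    have h2 : x/2 ≤ Real.sinh (x/2) := by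
      rcases eq_or_lt_of_le hx with h | h
      · simp [← h]
      · exact (Real.self_lt_sinh_iff.mpr (by linarith)).le
    have h3 := cosh_eq_two_sinh_half_sq x
    nlinarith
  have := key |y| (abs_nonneg y)
  rwa [Real.cosh_abs, sq_abs] at this

lemma cosh_sub_one_le (x : ℝ) (hx : 0 ≤ x) : Real.cosh x - 1 ≤ x^2 * Real.exp x / 2 := by
  have h1 : Real.sinh (x/2) ≤ (x/2) * Real.exp (x/2) := sinh_le_self_mul_exp (by linarith)
  have h2 : 0 ≤ Real.sinh (x/2) := Real.sinh_nonneg_iff.mpr (by linarith)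
  have h3 := cosh_eq_two_sinh_half_sq x
  have h4 : Real.exp (x/2) * Real.exp (x/2) = Real.exp x := by
    rw [← Real.exp_add]; ring_nf
  nlinarith [Real.exp_pos (x/2)]

lemma cosh_le_exp {x : ℝ} (hx : 0 ≤ x) : Real.cosh x ≤ Real.exp x := by
  rw [Real.cosh_eq]
  have h1 : Real.exp (-x) ≤ Real.exp x := Real.exp_le_exp.mpr (by linarith)
  linarith

lemma cosh_inj {x y : ℝ} (hx : 0 ≤ x) (hy : 0 ≤ y) (hc : Real.cosh x = Real.cosh y) : x = y := by
  have h1 := Real.cosh_le_cosh.mp hc.le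
  have h2 := Real.cosh_le_cosh.mp hc.ge
  rw [abs_of_nonneg hx, abs_of_nonneg hy] at h1 h2
  linarith

open UpperHalfPlane

/-! ### Explicit comparison configurations in the hyperbolic plane -/

noncomputable def wden (c s b : ℝ) : ℝ := c^2 + Real.exp b ^ 2 * s^2

lemma wden_pos {c s : ℝ} (h : c^2 + s^2 = 1) (b : ℝ) : 0 < wden c s b := by
  unfold wden
  nlinarith [Real.exp_pos b, sq_nonneg (Real.exp b * s), sq_nonneg (Real.exp b ^ 2 * s),
    sq_nonneg c, sq_nonneg s, mul_pos (Real.exp_pos b) (Real.exp_pos b)]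

noncomputable def wpt (c s : ℝ) (h : c^2 + s^2 = 1) (b : ℝ) : UpperHalfPlane :=
  UpperHalfPlane.mk ⟨c*s*(1 - Real.exp b ^ 2)/(wden c s b), Real.exp b/(wden c s b)⟩
    (div_pos (Real.exp_pos b) (wden_pos h b))

lemma wpt_re {c s : ℝ} (h : c^2 + s^2 = 1) (b : ℝ) :
    (wpt c s h b).re = c*s*(1 - Real.exp b ^ 2)/(wden c s b) := rfl

lemma wpt_im {c s : ℝ} (h : c^2 + s^2 = 1) (b : ℝ) :
    (wpt c s h b).im = Real.exp b/(wden c s b) := rfl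

lemma h10 : (1:ℝ)^2 + 0^2 = 1 := by norm_num

lemma wpt_zero {c s : ℝ} (h : c^2 + s^2 = 1) : wpt c s h 0 = wpt 1 0 h10 0 := by
  apply UpperHalfPlane.ext'
  · rw [wpt_re, wpt_re]
    simp [wden, Real.exp_zero]
  · rw [wpt_im, wpt_im]
    simp only [wden, Real.exp_zero, one_pow]
    rw [show c^2 + 1*s^2 = 1 by linarith]
    norm_num

/-- Hyperbolic law of cosines for two points on the same rotated geodesic ray. -/
lemma cosh_dist_wpt_same {c s : ℝ} (h : c^2 + s^2 = 1) (b b' : ℝ) :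
    Real.cosh (dist (wpt c s h b) (wpt c s h b')) = Real.cosh (b - b') := by
  rw [UpperHalfPlane.cosh_dist', wpt_re, wpt_re, wpt_im, wpt_im]
  have hu : (0:ℝ) < Real.exp b := Real.exp_pos b
  have hu' : (0:ℝ) < Real.exp b' := Real.exp_pos b'
  have hD : (0:ℝ) < wden c s b := wden_pos h b
  have hD' : (0:ℝ) < wden c s b' := wden_pos h b'
  set u := Real.exp b with hub
  set u' := Real.exp b' with hub'
  set Db := wden c s b with hDb
  set Db' := wden c s b' with hDb'
  have hRR : c*s*(1-u^2)/Db - c*s*(1-u'^2)/Db' = (c*s*(u'^2 - u^2))/(Db*Db') := by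
    rw [div_sub_div _ _ hD.ne' hD'.ne']
    congr 1
    rw [hDb, hDb', wden, wden, ← hub, ← hub']
    linear_combination (c*s*(u'^2-u^2))*h
  have hnum : (c*s*(u'^2 - u^2))^2 + u^2*Db'^2 + u'^2*Db^2 = (u^2+u'^2)*(Db*Db') := by
    rw [hDb, hDb', wden, wden, ← hub, ← hub']
    ring
  have hcosh : Real.cosh (b - b') = (u^2+u'^2)/(2*(u*u')) := by
    rw [Real.cosh_eq, Real.exp_neg, Real.exp_sub, ← hub, ← hub']
    field_simp
  have hN : (c*s*(u'^2 - u^2)/(Db*Db'))^2 + (u/Db)^2 + (u'/Db')^2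
      = (u^2+u'^2)/(Db*Db') := by
    have e1 : (c*s*(u'^2 - u^2)/(Db*Db'))^2 + (u/Db)^2 + (u'/Db')^2
        = ((c*s*(u'^2 - u^2))^2 + u^2*Db'^2 + u'^2*Db^2)/((Db*Db')^2) := by
      field_simp
    rw [e1, hnum, div_eq_div_iff (by positivity) (by positivity)]
    ring
  rw [hRR, hN, hcosh]
  rw [div_eq_div_iff (by positivity) (by positivity)]
  field_simp

lemma dist_wpt_same {c s : ℝ} (h : c^2 + s^2 = 1) (b b' : ℝ) :
    dist (wpt c s h b) (wpt c s h b') = |b - b'| := by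
  apply cosh_inj dist_nonneg (abs_nonneg _)
  rw [cosh_dist_wpt_same, Real.cosh_abs]

/-- Hyperbolic law of cosines: distance between points on two geodesic rays from `i`,
making an angle `θ` with `cos θ = c² - s²`. -/
lemma cosh_dist_wpt {c s : ℝ} (h : c^2 + s^2 = 1) (a b : ℝ) :
    Real.cosh (dist (wpt 1 0 h10 a) (wpt c s h b))
      = Real.cosh a * Real.cosh b - (c^2 - s^2) * (Real.sinh a * Real.sinh b) := by
  rw [UpperHalfPlane.cosh_dist', wpt_re, wpt_re, wpt_im, wpt_im]
  have hu : (0:ℝ) < Real.exp b := Real.exp_pos b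
  have hv : (0:ℝ) < Real.exp a := Real.exp_pos a
  have hD : (0:ℝ) < wden c s b := wden_pos h b
  have hD1 : wden 1 0 a = 1 := by unfold wden; norm_num
  set u := Real.exp b with hub
  set v := Real.exp a with hva
  set Db := wden c s b with hDb
  have hre1 : (1:ℝ)*0*(1 - v^2)/(wden 1 0 a) = 0 := by rw [hD1]; ring
  have him1 : v/(wden 1 0 a) = v := by rw [hD1, div_one]
  rw [hre1, him1]
  have hnum : (c*s*(1 - u^2))^2 + u^2 + v^2*Db^2 = (s^2 + u^2*c^2 + v^2*Db)*Db := by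
    rw [hDb, wden, ← hub]
    linear_combination (-(u^2)*(c^2+s^2+1))*h
  have hN : (0 - c*s*(1 - u^2)/Db)^2 + v^2 + (u/Db)^2
      = (s^2 + u^2*c^2 + v^2*Db)/Db := by
    have e1 : (0 - c*s*(1 - u^2)/Db)^2 + v^2 + (u/Db)^2
        = ((c*s*(1 - u^2))^2 + u^2 + v^2*Db^2)/(Db^2) := by
      field_simp
      ring
    rw [e1, hnum, div_eq_div_iff (by positivity) (by positivity)]
    ring
  rw [hN]
  have hrhs : Real.cosh a * Real.cosh b - (c^2 - s^2) * (Real.sinh a * Real.sinh b)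
      = ((1+u^2)*(1+v^2) - (c^2-s^2)*((1-u^2)*(1-v^2)))/(4*(u*v)) := by
    rw [Real.cosh_eq, Real.cosh_eq, Real.sinh_eq, Real.sinh_eq, Real.exp_neg, Real.exp_neg,
      ← hub, ← hva]
    field_simp
    ring
  have hL2 : ((s^2 + u^2*c^2 + v^2*Db)/Db)/(2*v*(u/Db))
      = (s^2 + u^2*c^2 + v^2*Db)/(2*(u*v)) := by
    rw [div_eq_div_iff (by positivity) (by positivity)]
    field_simp
  rw [hL2, hrhs, div_eq_div_iff (by positivity) (by positivity)]
  rw [hDb, wden, ← hub]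
  linear_combination (4*u*v*(1+u^2*v^2) - 2*u*v*(1-u^2)*(1-v^2))*h

lemma dist_wpt_mixed {c s : ℝ} (h : c^2 + s^2 = 1) {a b C : ℝ} (hC : 0 ≤ C)
    (hval : Real.cosh a * Real.cosh b - (c^2 - s^2) * (Real.sinh a * Real.sinh b)
      = Real.cosh C) :
    dist (wpt 1 0 h10 a) (wpt c s h b) = C := by
  apply cosh_inj dist_nonneg hC
  rw [cosh_dist_wpt h a b, hval]

/-- Existence of a comparison configuration in the hyperbolic plane, together with the
law-of-cosines bound on the distance of the two comparison points. -/
lemma comparison_points (A B C s : ℝ) (hA : 0 < A) (hB : 0 < B)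
    (h1 : |A - B| ≤ C) (h2 : C ≤ A + B) (hs0 : 0 ≤ s) (hsA : s ≤ A) (hsB : s ≤ B) :
    ∃ x' y' z' p q : UpperHalfPlane,
      dist x' y' = A ∧ dist x' z' = B ∧ dist y' z' = C ∧
      dist x' p = s ∧ dist p y' = A - s ∧ dist x' q = s ∧ dist q z' = B - s ∧
      (dist p q)^2 ≤ 2 * Real.sinh s ^ 2 * (Real.cosh C - Real.cosh (A - B))
          / (Real.sinh A * Real.sinh B) := by
  have hSA : 0 < Real.sinh A := Real.sinh_pos_iff.mpr hA
  have hSB : 0 < Real.sinh B := Real.sinh_pos_iff.mpr hB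
  have hSS : 0 < Real.sinh A * Real.sinh B := mul_pos hSA hSB
  have hC0 : 0 ≤ C := le_trans (abs_nonneg _) h1
  set k := (Real.cosh A * Real.cosh B - Real.cosh C) / (Real.sinh A * Real.sinh B) with hk
  have hcoshAB : Real.cosh (A - B) ≤ Real.cosh C := by
    rw [← Real.cosh_abs (A-B), ← Real.cosh_abs C]
    apply Real.cosh_le_cosh.mpr
    rw [abs_abs, abs_abs, abs_of_nonneg hC0]
    exact h1

  have hcoshAB' : Real.cosh C ≤ Real.cosh (A + B) := by
    rw [← Real.cosh_abs C, ← Real.cosh_abs (A+B)]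
    apply Real.cosh_le_cosh.mpr
    rw [abs_abs, abs_abs, abs_of_nonneg hC0, abs_of_nonneg (by linarith : (0:ℝ) ≤ A + B)]
    exact h2
  have hk1 : k ≤ 1 := by
    rw [hk, div_le_one hSS]
    have := Real.cosh_sub A B
    linarith
  have hkm1 : -1 ≤ k := by
    rw [hk, le_div_iff₀ hSS]
    have := Real.cosh_add A B
    linarith
  set cc := Real.sqrt ((1+k)/2) with hcc
  set ss := Real.sqrt ((1-k)/2) with hss
  have hcc2 : cc^2 = (1+k)/2 := Real.sq_sqrt (by linarith)
  have hss2 : ss^2 = (1-k)/2 := Real.sq_sqrt (by linarith)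
  have hcs : cc^2 + ss^2 = 1 := by rw [hcc2, hss2]; ring
  have hkval : cc^2 - ss^2 = k := by rw [hcc2, hss2]; ring
  have hyz : Real.cosh A * Real.cosh B - (cc^2 - ss^2) * (Real.sinh A * Real.sinh B)
      = Real.cosh C := by
    rw [hkval, hk, div_mul_cancel₀ _ hSS.ne']
    ring
  have h1k : (1 - k) * (Real.sinh A * Real.sinh B)
      = Real.cosh C - Real.cosh (A - B) := by
    rw [hk, Real.cosh_sub, sub_mul, div_mul_cancel₀ _ hSS.ne']
    ring
  refine ⟨wpt 1 0 h10 0, wpt 1 0 h10 A, wpt cc ss hcs B, wpt 1 0 h10 s, wpt cc ss hcs s,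
    ?_, ?_, ?_, ?_, ?_, ?_, ?_, ?_⟩
  · rw [dist_wpt_same, abs_of_nonpos (by linarith)]; ring
  · rw [← wpt_zero hcs, dist_wpt_same, abs_of_nonpos (by linarith)]; ring
  · exact dist_wpt_mixed hcs hC0 hyz
  · rw [dist_wpt_same, abs_of_nonpos (by linarith)]; ring
  · rw [dist_wpt_same, abs_of_nonpos (by linarith)]; ring
  · rw [← wpt_zero hcs, dist_wpt_same, abs_of_nonpos (by linarith)]; ring
  · rw [dist_wpt_same, abs_of_nonpos (by linarith)]; ring
  · -- the law-of-cosines bound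
    have hcd : Real.cosh (dist (wpt 1 0 h10 s) (wpt cc ss hcs s))
        = 1 + Real.sinh s ^ 2 * (1 - k) := by
      rw [cosh_dist_wpt hcs s s, hkval]
      have := Real.cosh_sq s
      nlinarith []
    have hb := sq_le_two_mul_cosh_sub_one (dist (wpt 1 0 h10 s) (wpt cc ss hcs s))
    rw [hcd] at hb
    calc (dist (wpt 1 0 h10 s) (wpt cc ss hcs s))^2
        ≤ 2*(1 + Real.sinh s ^ 2 * (1-k) - 1) := hb
      _ = 2 * Real.sinh s ^2 * ((1-k) * (Real.sinh A * Real.sinh B))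
            / (Real.sinh A * Real.sinh B) := by
          field_simp
          ring
      _ = 2 * Real.sinh s ^ 2 * (Real.cosh C - Real.cosh (A - B))
            / (Real.sinh A * Real.sinh B) := by rw [h1k]

/-! ### CAT(-1) comparison for points at equal parameter on two sides -/

lemma X_comp {X : Type*} [MetricSpace X] (hcat : CATMinusOne X) {x y z : X}
    {gam1 gam2 : ℝ → X} (hg1 : IsGeodesicSegment gam1 x y) (hg2 : IsGeodesicSegment gam2 x z)
    {s : ℝ} (hs0 : 0 ≤ s) (hsA : s ≤ dist x y) (hsB : s ≤ dist x z)
    (hA : 0 < dist x y) (hB : 0 < dist x z) :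
    dist (gam1 s) (gam2 s) ^ 2 ≤ 2 * Real.sinh s ^ 2 *
      (Real.cosh (dist y z) - Real.cosh (dist x y - dist x z))
        / (Real.sinh (dist x y) * Real.sinh (dist x z)) := by
  have htri1 : |dist x y - dist x z| ≤ dist y z := by
    have := abs_dist_sub_le y z x
    rwa [dist_comm y x, dist_comm z x] at this
  have htri2 : dist y z ≤ dist x y + dist x z := by
    have := dist_triangle y x z
    rwa [dist_comm y x] at this
  obtain ⟨x', y', z', p, q, hxy, hxz, hyz, hp1, hp2, hq1, hq2, hbound⟩ :=
    comparison_points (dist x y) (dist x z) (dist y z) s hA hB htri1 htri2 hs0 hsA hsB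
  have hle := hcat x y z gam1 gam2 hg1 hg2 x' y' z' hxy hxz hyz s ⟨hs0, hsA⟩ s ⟨hs0, hsB⟩
    p q hp1 hp2 hq1 hq2
  calc dist (gam1 s) (gam2 s) ^ 2 ≤ dist p q ^ 2 := by
        apply pow_le_pow_left₀ dist_nonneg hle
    _ ≤ _ := hbound

/-! ### Geodesic segments from isometric lines -/

lemma seg_shift {X : Type*} [MetricSpace X] {c : ℝ → X} (hc : Isometry c) {u T : ℝ}
    (huT : u ≤ T) : IsGeodesicSegment (fun r => c (u + r)) (c u) (c T) := by
  have hd : dist (c u) (c T) = T - u := by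
    rw [hc.dist_eq, Real.dist_eq, abs_of_nonpos (by linarith)]; ring
  refine ⟨by simp, by rw [hd]; show c (u + (T - u)) = c T; rw [show u + (T - u) = T by ring], fun a _ b _ => ?_⟩
  rw [hc.dist_eq, Real.dist_eq]
  congr 1
  ring

lemma seg_rev {X : Type*} [MetricSpace X] {c : ℝ → X} (hc : Isometry c) {v T : ℝ}
    (hvT : v ≤ T) : IsGeodesicSegment (fun r => c (T - r)) (c T) (c v) := by
  have hd : dist (c T) (c v) = T - v := by
    rw [hc.dist_eq, Real.dist_eq, abs_of_nonneg (by linarith)]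
  refine ⟨by simp, by rw [hd]; show c (T - (T - v)) = c v; rw [show T - (T - v) = v by ring], fun a _ b _ => ?_⟩
  rw [hc.dist_eq, Real.dist_eq]
  rw [show T - a - (T - b) = -(a - b) by ring, abs_neg]

lemma seg_line {X : Type*} [MetricSpace X] {g : ℝ → X} {x z : X} (hg : Isometry g)
    (h0 : g 0 = x) (hD : g (dist x z) = z) : IsGeodesicSegment g x z := by
  refine ⟨h0, hD, fun a _ b _ => ?_⟩
  rw [hg.dist_eq, Real.dist_eq]

lemma seg_line_rev {X : Type*} [MetricSpace X] {g : ℝ → X} {x z : X} (hg : Isometry g)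
    (h0 : g 0 = x) (hD : g (dist x z) = z) :
    IsGeodesicSegment (fun r => g (dist x z - r)) z x := by
  have hzx : dist z x = dist x z := dist_comm z x
  refine ⟨by show g (dist x z - 0) = z; rw [sub_zero, hD], by show g (dist x z - dist z x) = x; rw [hzx, sub_self, h0], fun a _ b _ => ?_⟩
  rw [hg.dist_eq, Real.dist_eq]
  rw [show dist x z - a - (dist x z - b) = -(a - b) by ring, abs_neg]

/-! ### Exponential arithmetic helper -/

lemma hexp_quot (p q r w : ℝ) :
    2*(Real.exp p/2)^2 * Real.exp q / (Real.exp r/4*(Real.exp w/4))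
      = 8 * Real.exp (2*p + q - r - w) := by
  rw [show 2*p + q - r - w = (p + p + q) - (r + w) by ring]
  simp only [Real.exp_sub, Real.exp_add]
  have h1 := Real.exp_pos p
  have h2 := Real.exp_pos q
  have h3 := Real.exp_pos r
  have h4 := Real.exp_pos w
  field_simp
  ring

lemma sqrt_bound {E M : ℝ} (hE : 0 ≤ E) (hM : 0 ≤ M) (h : E^2 ≤ M^2) : E ≤ M := by
  nlinarith

/-! ### The core geometric estimate -/

set_option maxHeartbeats 2000000 in
lemma core_est {X : Type*} [MetricSpace X] (hgc : GeodesicallyComplete X)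
    (hcat : CATMinusOne X) {c₁ c₂ : ℝ → X} (hc₁ : Isometry c₁) (hc₂ : Isometry c₂)
    {t u T : ℝ} (hu : u ≤ t - 1) (hdel : dist (c₁ u) (c₂ u) ≤ 1) (hT : t + 1 ≤ T) :
    dist (c₁ t) (c₂ t) ≤
      Real.sqrt (8 * Real.exp (dist (c₁ u) (c₂ u))) *
        Real.exp (t + (dist (c₁ T) (c₂ T) / 2 - T))
      + dist (c₁ u) (c₂ u)
      + 2 * dist (c₁ u) (c₂ u) * Real.exp (dist (c₁ u) (c₂ u)) := by
  set dd := dist (c₁ u) (c₂ u) with hdd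
  set b := dist (c₁ u) (c₂ T) with hbdef
  set D := dist (c₁ T) (c₂ T) with hD
  have hdd0 : 0 ≤ dd := dist_nonneg
  have hD0 : 0 ≤ D := dist_nonneg
  have huT : u ≤ T := by linarith
  have hut : u ≤ t := by linarith
  have hd11 : dist (c₁ u) (c₁ T) = T - u := by
    rw [hc₁.dist_eq, Real.dist_eq, abs_of_nonpos (by linarith)]; ring
  have hd22 : dist (c₂ u) (c₂ T) = T - u := by
    rw [hc₂.dist_eq, Real.dist_eq, abs_of_nonpos (by linarith)]; ring
  have hd22' : dist (c₂ T) (c₂ u) = T - u := by rw [dist_comm]; exact hd22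
  have hb_lb : T - u - dd ≤ b := by
    have h := dist_triangle (c₂ u) (c₁ u) (c₂ T)
    rw [hd22, dist_comm (c₂ u) (c₁ u), ← hdd, ← hbdef] at h
    linarith
  have hb_ub : b ≤ dd + (T - u) := by
    have h := dist_triangle (c₁ u) (c₂ u) (c₂ T)
    rw [hd22, ← hdd, ← hbdef] at h
    linarith
  have hb1 : 1 ≤ b := by linarith
  have hTu2 : 2 ≤ T - u := by linarith
  -- the geodesic line from c₁ u to c₂ T
  obtain ⟨g, hgI, hg0, hgb⟩ := hgc (c₁ u) (c₂ T)
  rw [← hbdef] at hgb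
  have hgb' : g (dist (c₁ u) (c₂ T)) = c₂ T := by rw [← hbdef]; exact hgb
  -- Triangle 1 : apex c₁ u, sides to c₁ T (along c₁) and to c₂ T (along g)
  have hseg1 : IsGeodesicSegment (fun r => c₁ (u + r)) (c₁ u) (c₁ T) := seg_shift hc₁ huT
  have hseg2 : IsGeodesicSegment g (c₁ u) (c₂ T) := seg_line hgI hg0 hgb'
  have E1sq := X_comp hcat hseg1 hseg2 (s := t - u) (by linarith)
    (by rw [hd11]; linarith) (by rw [← hbdef]; linarith)
    (by rw [hd11]; linarith) (by rw [← hbdef]; linarith)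
  rw [hd11, ← hbdef, ← hD] at E1sq
  rw [show u + (t - u) = t by ring] at E1sq
  -- bound for triangle 1
  have hsinh_tu : Real.sinh (t - u) ≤ Real.exp (t - u)/2 := sinh_le_half_exp (by linarith)
  have hsinh_tu0 : 0 ≤ Real.sinh (t - u) := Real.sinh_nonneg_iff.mpr (by linarith)
  have hden_lb : Real.exp (T - u)/4 * (Real.exp b/4) ≤ Real.sinh (T - u) * Real.sinh b := by
    have h1 := quarter_exp_le_sinh (x := T - u) (by linarith)
    have h2 := quarter_exp_le_sinh (x := b) hb1
    have h3 := Real.exp_pos (T - u)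
    have h4 := Real.exp_pos b
    nlinarith
  have hden_pos : (0:ℝ) < Real.exp (T - u)/4 * (Real.exp b/4) := by positivity
  have hnum1 : 2 * Real.sinh (t - u)^2 * (Real.cosh D - Real.cosh (T - u - b))
      ≤ 2 * (Real.exp (t - u)/2)^2 * Real.exp D := by
    have hA := cosh_le_exp hD0
    have hB := Real.cosh_pos (T - u - b)
    have hs2 : Real.sinh (t - u)^2 ≤ (Real.exp (t - u)/2)^2 := by nlinarith
    rcases le_or_gt (Real.cosh D - Real.cosh (T - u - b)) 0 with hneg | hpos
    · nlinarith [sq_nonneg (Real.sinh (t - u)), sq_nonneg (Real.exp (t - u)/2), Real.exp_pos D]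
    · have hfac : Real.cosh D - Real.cosh (T - u - b) ≤ Real.exp D := by linarith
      nlinarith [sq_nonneg (Real.sinh (t - u)), sq_nonneg (Real.exp (t - u)/2)]
  have E1b : dist (c₁ t) (g (t - u)) ^ 2
      ≤ 8 * Real.exp dd * Real.exp (t + (D/2 - T)) ^ 2 := by
    have step1 : dist (c₁ t) (g (t - u)) ^ 2
        ≤ 2 * (Real.exp (t - u)/2)^2 * Real.exp D / (Real.exp (T - u)/4 * (Real.exp b/4)) := by
      refine le_trans E1sq ?_
      exact div_le_div₀ (by positivity) hnum1 hden_pos hden_lb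
    rw [hexp_quot] at step1
    refine le_trans step1 ?_
    have hexpineq : 2*(t - u) + D - (T - u) - b ≤ dd + (t + (D/2 - T)) + (t + (D/2 - T)) := by
      linarith
    calc 8 * Real.exp (2*(t - u) + D - (T - u) - b)
        ≤ 8 * Real.exp (dd + (t + (D/2 - T)) + (t + (D/2 - T))) := by
          have := Real.exp_le_exp.mpr hexpineq
          linarith
      _ = 8 * Real.exp dd * Real.exp (t + (D/2 - T)) ^ 2 := by
          rw [Real.exp_add, Real.exp_add, sq]
          ring
  have E1 : dist (c₁ t) (g (t - u))
      ≤ Real.sqrt (8 * Real.exp dd) * Real.exp (t + (D/2 - T)) := by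
    apply sqrt_bound dist_nonneg (by positivity)
    rw [mul_pow, Real.sq_sqrt (by positivity)]
    exact E1b
  -- Triangle 2 : apex c₂ T, sides to c₂ u (along reversed c₂) and to c₁ u (along reversed g)
  have hseg3 : IsGeodesicSegment (fun r => c₂ (T - r)) (c₂ T) (c₂ u) := seg_rev hc₂ huT
  have hseg4 : IsGeodesicSegment (fun r => g (dist (c₁ u) (c₂ T) - r)) (c₂ T) (c₁ u) :=
    seg_line_rev hgI hg0 hgb'
  have hd21 : dist (c₂ T) (c₁ u) = b := by rw [dist_comm (c₂ T) (c₁ u)]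
  have hd2u1u : dist (c₂ u) (c₁ u) = dd := by rw [dist_comm (c₂ u) (c₁ u)]
  have E2sq := X_comp hcat hseg3 hseg4 (s := T - t) (by linarith)
    (by rw [hd22']; linarith) (by rw [hd21]; linarith)
    (by rw [hd22']; linarith) (by rw [hd21]; linarith)
  rw [hd22', hd21, hd2u1u] at E2sq
  rw [show T - (T - t) = t by ring] at E2sq
  have hnum2 : 2 * Real.sinh (T - t)^2 * (Real.cosh dd - Real.cosh (T - u - b))
      ≤ 2 * (Real.exp (T - t)/2)^2 * (Real.cosh dd - 1) := by
    have hsh : Real.sinh (T - t) ≤ Real.exp (T - t)/2 := sinh_le_half_exp (by linarith)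
    have hsh0 : 0 ≤ Real.sinh (T - t) := Real.sinh_nonneg_iff.mpr (by linarith)
    have h1 := Real.one_le_cosh (T - u - b)
    have h2 := Real.one_le_cosh dd
    have hs2 : Real.sinh (T - t)^2 ≤ (Real.exp (T - t)/2)^2 := by nlinarith
    have hfac : Real.cosh dd - Real.cosh (T - u - b) ≤ Real.cosh dd - 1 := by linarith
    rcases le_or_gt (Real.cosh dd - Real.cosh (T - u - b)) 0 with hneg | hpos
    · nlinarith [sq_nonneg (Real.sinh (T - t)), sq_nonneg (Real.exp (T - t)/2)]
    · nlinarith [sq_nonneg (Real.sinh (T - t)), sq_nonneg (Real.exp (T - t)/2)]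
  have E2b : dist (c₂ t) (g (b - (T - t))) ^ 2 ≤ (2 * dd * Real.exp dd)^2 := by
    have step1 : dist (c₂ t) (g (b - (T - t))) ^ 2
        ≤ 2 * (Real.exp (T - t)/2)^2 * (Real.cosh dd - 1)
            / (Real.exp (T - u)/4 * (Real.exp b/4)) := by
      refine le_trans E2sq ?_
      refine div_le_div₀ ?_ hnum2 hden_pos hden_lb
      have h1 := Real.one_le_cosh dd
      nlinarith [sq_nonneg (Real.exp (T - t)/2)]
    have e0 : 2 * (Real.exp (T - t)/2)^2 * (Real.cosh dd - 1)
          / (Real.exp (T - u)/4 * (Real.exp b/4))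
        = (Real.cosh dd - 1) *
          (2 * (Real.exp (T - t)/2)^2 * Real.exp 0 / (Real.exp (T - u)/4 * (Real.exp b/4))) := by
      rw [Real.exp_zero]; ring
    rw [e0, hexp_quot] at step1
    have hcosh_small : Real.cosh dd - 1 ≤ dd^2 * Real.exp dd / 2 := cosh_sub_one_le dd hdd0
    have hexp_small : Real.exp (2*(T - t) + 0 - (T - u) - b) ≤ Real.exp dd := by
      apply Real.exp_le_exp.mpr
      linarith
    refine le_trans step1 ?_
    have h1 : 0 ≤ Real.cosh dd - 1 := by have := Real.one_le_cosh dd; linarith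
    calc (Real.cosh dd - 1) * (8 * Real.exp (2*(T - t) + 0 - (T - u) - b))
        ≤ (dd^2 * Real.exp dd / 2) * (8 * Real.exp dd) := by
          apply mul_le_mul hcosh_small (by linarith [Real.exp_pos (2*(T - t) + 0 - (T - u) - b)])
            (by positivity) (by positivity)
      _ = (2 * dd * Real.exp dd)^2 := by ring
  have E2 : dist (c₂ t) (g (b - (T - t))) ≤ 2 * dd * Real.exp dd := by
    exact sqrt_bound dist_nonneg (by positivity) E2b
  -- the middle segment
  have hmid : dist (g (t - u)) (g (b - (T - t))) ≤ dd := by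
    have h : dist (g (t - u)) (g (b - (T - t))) = |T - u - b| := by
      rw [hgI.dist_eq, Real.dist_eq]
      rw [show t - u - (b - (T - t)) = -(T - u - b) * (-1) by ring]
      rw [show (-(T - u - b)) * (-1) = T - u - b by ring]
    rw [h]
    rw [abs_le]
    constructor <;> linarith
  -- put the three pieces together
  calc dist (c₁ t) (c₂ t)
      ≤ dist (c₁ t) (g (t - u)) + dist (g (t - u)) (g (b - (T - t)))
          + dist (g (b - (T - t))) (c₂ t) := dist_triangle4 _ _ _ _
    _ ≤ Real.sqrt (8 * Real.exp dd) * Real.exp (t + (D/2 - T)) + dd + 2 * dd * Real.exp dd := by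
        rw [dist_comm (g (b - (T - t))) (c₂ t)]
        linarith

/-! ### Integrability of the weights -/

lemma one_add_sq_le_exp_abs (s : ℝ) : 1 + s^2 ≤ 8 * Real.exp |s| := by
  set t := |s|/4 with ht
  have ht0 : 0 ≤ t := by positivity
  have hE : t + 1 ≤ Real.exp t := Real.add_one_le_exp t
  have hE0 : 0 < Real.exp t := Real.exp_pos t
  have hexp4 : Real.exp |s| = Real.exp t * Real.exp t * Real.exp t * Real.exp t := by
    rw [← Real.exp_add, ← Real.exp_add, ← Real.exp_add]
    congr 1
    rw [ht]; ring
  have h2 : (1+t)*(1+t) ≤ Real.exp t * Real.exp t := by nlinarith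
  have h3 : ((1+t)*(1+t))*((1+t)*(1+t)) ≤ (Real.exp t * Real.exp t)*(Real.exp t * Real.exp t) := by
    nlinarith [sq_nonneg (1+t)]
  have hs2 : s^2 = 16 * t^2 := by rw [ht, div_pow, ← sq_abs s]; ring
  rw [hexp4, hs2]
  nlinarith [sq_nonneg t, sq_nonneg (1+t)]

lemma exp_neg_abs_integrable : Integrable (fun s : ℝ => Real.exp (-|s|)) := by
  have hc : Continuous fun s : ℝ => Real.exp (-|s|) := by
    have := Real.continuous_exp.comp continuous_abs.neg
    exact this
  apply (integrable_inv_one_add_sq.const_mul 8).mono' hc.aestronglyMeasurable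
  apply Filter.Eventually.of_forall
  intro s
  have h0 : (0:ℝ) < 1 + s^2 := by positivity
  rw [Real.norm_eq_abs, abs_of_pos (Real.exp_pos _), Real.exp_neg,
    show (8:ℝ)*(1+s^2)⁻¹ = 8/(1+s^2) by rw [div_eq_mul_inv],
    inv_eq_one_div, div_le_div_iff₀ (Real.exp_pos _) h0]
  have := one_add_sq_le_exp_abs s
  nlinarith [Real.exp_pos |s|]

lemma integrand_integrable {X : Type*} [MetricSpace X] {c₁ c₂ : ℝ → X}
    (hc₁ : Isometry c₁) (hc₂ : Isometry c₂) (u : ℝ) :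
    Integrable (fun r : ℝ => dist (c₁ (u + r)) (c₂ (u + r)) * Real.exp (-2 * |r|)) := by
  have hcont : Continuous (fun r : ℝ => dist (c₁ (u + r)) (c₂ (u + r)) * Real.exp (-2 * |r|)) := by
    apply Continuous.mul
    · exact Continuous.dist (hc₁.continuous.comp (continuous_const.add continuous_id))
        (hc₂.continuous.comp (continuous_const.add continuous_id))
    · exact Real.continuous_exp.comp (continuous_const.mul continuous_abs)
  apply (exp_neg_abs_integrable.const_mul (dist (c₁ u) (c₂ u) + 2)).mono'
    hcont.aestronglyMeasurable
  apply Filter.Eventually.of_forall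
  intro r
  rw [Real.norm_eq_abs, abs_of_nonneg (by positivity)]
  have hd : dist (c₁ (u + r)) (c₂ (u + r)) ≤ dist (c₁ u) (c₂ u) + 2 * |r| := by
    have h1 := dist_triangle4 (c₁ (u+r)) (c₁ u) (c₂ u) (c₂ (u+r))
    have e1 : dist (c₁ (u+r)) (c₁ u) = |r| := by
      rw [hc₁.dist_eq, Real.dist_eq, show u + r - u = r by ring]
    have e2 : dist (c₂ u) (c₂ (u+r)) = |r| := by
      rw [hc₂.dist_eq, Real.dist_eq, show u - (u + r) = -r by ring, abs_neg]
    linarith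
  have h3 : Real.exp (-2 * |r|) = Real.exp (-|r|) * Real.exp (-|r|) := by
    rw [← Real.exp_add]; congr 1; ring
  have h4 : |r| * Real.exp (-|r|) ≤ 1 := by
    have h5 := Real.add_one_le_exp |r|
    have h6 : Real.exp (-|r|) * Real.exp |r| = 1 := by rw [← Real.exp_add]; simp
    nlinarith [Real.exp_pos (-|r|), abs_nonneg r]
  have h7 : Real.exp (-|r|) ≤ 1 := Real.exp_le_one_iff.mpr (by simp [abs_nonneg])
  have hd0 : (0:ℝ) ≤ dist (c₁ u) (c₂ u) := dist_nonneg
  calc dist (c₁ (u+r)) (c₂ (u+r)) * Real.exp (-2 * |r|)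
      ≤ (dist (c₁ u) (c₂ u) + 2 * |r|) * Real.exp (-2 * |r|) :=
        mul_le_mul_of_nonneg_right hd (Real.exp_pos _).le
    _ ≤ (dist (c₁ u) (c₂ u) + 2) * Real.exp (-|r|) := by
        rw [h3]
        have e0 := Real.exp_pos (-|r|)
        have hA : dist (c₁ u) (c₂ u) * Real.exp (-|r|) ≤ dist (c₁ u) (c₂ u) := by nlinarith
        have hB : 2 * |r| * Real.exp (-|r|) ≤ 2 := by nlinarith
        nlinarith [mul_le_mul_of_nonneg_right hA e0.le, mul_le_mul_of_nonneg_right hB e0.le]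

lemma dGX_flow_eq {X : Type*} [MetricSpace X] (c₁ c₂ : ℝ → X) (u : ℝ) :
    dGX (geodFlow u c₁) (geodFlow u c₂)
      = ∫ r : ℝ, dist (c₁ (u + r)) (c₂ (u + r)) * Real.exp (-2 * |r|) := rfl

open Filter in
/-- Along the strong unstable set, the pointwise distance tends to `0` at `-∞`. -/
lemma dist_tendsto_zero {X : Type*} [MetricSpace X] {c₁ c₂ : ℝ → X}
    (hc₁ : Isometry c₁) (hc₂ : Isometry c₂)
    (hunst : Tendsto (fun t : ℝ => dGX (geodFlow t c₁) (geodFlow t c₂)) atBot (nhds 0)) :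
    Tendsto (fun u : ℝ => dist (c₁ u) (c₂ u)) atBot (nhds 0) := by
  rw [Metric.tendsto_nhds]
  intro ε hε
  set r := ε/8 with hr
  have hr0 : 0 < r := by positivity
  have hη : (0:ℝ) < (ε/4) * (2*r) * Real.exp (-(2*r)) := by positivity
  have hev : ∀ᶠ u in atBot,
      dGX (geodFlow u c₁) (geodFlow u c₂) < (ε/4) * (2*r) * Real.exp (-(2*r)) :=
    hunst.eventually_lt_const hη
  filter_upwards [hev] with u hu
  rw [Real.dist_eq, sub_zero, abs_of_nonneg dist_nonneg]
  rcases le_or_gt (dist (c₁ u) (c₂ u)) (2*r) with hsmall | hbig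
  · linarith
  · set dd := dist (c₁ u) (c₂ u) with hdd
    have hconst : (0:ℝ) ≤ (dd - 2*r) * Real.exp (-(2*r)) :=
      mul_nonneg (by linarith) (Real.exp_pos _).le
    have hlow : (dd - 2*r) * Real.exp (-(2*r)) * (2*r)
        ≤ dGX (geodFlow u c₁) (geodFlow u c₂) := by
      rw [dGX_flow_eq]
      have hind : ∫ x : ℝ, Set.indicator (Set.Icc (-r) r)
          (fun _ => (dd - 2*r) * Real.exp (-(2*r))) x
          = (dd - 2*r) * Real.exp (-(2*r)) * (2*r) := by
        rw [MeasureTheory.integral_indicator_const _ measurableSet_Icc,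
          Real.volume_real_Icc_of_le (by linarith : -r ≤ r), smul_eq_mul]
        ring
      rw [← hind]
      apply integral_mono_of_nonneg
      · exact Filter.Eventually.of_forall fun x =>
          Set.indicator_nonneg (fun _ _ => hconst) x
      · exact integrand_integrable hc₁ hc₂ u
      · apply Filter.Eventually.of_forall
        intro x
        by_cases hx : x ∈ Set.Icc (-r) r
        · rw [Set.indicator_of_mem hx]
          obtain ⟨hx1, hx2⟩ := hx
          have habs : |x| ≤ r := abs_le.mpr ⟨hx1, hx2⟩
          have hdx : dd - 2*|x| ≤ dist (c₁ (u + x)) (c₂ (u + x)) := by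
            have h1 := dist_triangle4 (c₁ u) (c₁ (u+x)) (c₂ (u+x)) (c₂ u)
            have e1 : dist (c₁ u) (c₁ (u+x)) = |x| := by
              rw [hc₁.dist_eq, Real.dist_eq, show u - (u + x) = -x by ring, abs_neg]
            have e2 : dist (c₂ (u+x)) (c₂ u) = |x| := by
              rw [hc₂.dist_eq, Real.dist_eq, show u + x - u = x by ring]
            rw [hdd]
            linarith
          have hex : Real.exp (-(2*r)) ≤ Real.exp (-2*|x|) :=
            Real.exp_le_exp.mpr (by linarith)
          calc (dd - 2*r) * Real.exp (-(2*r))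
              ≤ (dd - 2*|x|) * Real.exp (-2*|x|) :=
                mul_le_mul (by linarith) hex (Real.exp_pos _).le (by linarith)
            _ ≤ dist (c₁ (u + x)) (c₂ (u + x)) * Real.exp (-2*|x|) :=
                mul_le_mul_of_nonneg_right hdx (Real.exp_pos _).le
        · rw [Set.indicator_of_notMem hx]
          positivity
    have hcomb := lt_of_le_of_lt hlow hu
    nlinarith [Real.exp_pos (-(2*r)), mul_pos hr0 (Real.exp_pos (-(2*r)))]

open Filter in
/-- The main pointwise estimate: `d(c₁ t, c₂ t) ≤ √8 e^{t+ℓ}`. -/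
lemma main_pointwise {X : Type*} [MetricSpace X] (hgc : GeodesicallyComplete X)
    (hcat : CATMinusOne X) {c₁ c₂ : ℝ → X} (hc₁ : Isometry c₁) (hc₂ : Isometry c₂)
    (hunst : Tendsto (fun t : ℝ => dGX (geodFlow t c₁) (geodFlow t c₂)) atBot (nhds 0))
    {ℓ : ℝ} (hl : Tendsto (fun t : ℝ => dist (c₁ t) (c₂ t) / 2 - t) atTop (nhds ℓ))
    (t : ℝ) :
    dist (c₁ t) (c₂ t) ≤ Real.sqrt 8 * Real.exp (t + ℓ) := by
  have hL3 := dist_tendsto_zero hc₁ hc₂ hunst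
  have stepA : ∀ u : ℝ, u ≤ t - 1 → dist (c₁ u) (c₂ u) ≤ 1 →
      dist (c₁ t) (c₂ t) ≤ Real.sqrt (8 * Real.exp (dist (c₁ u) (c₂ u))) * Real.exp (t + ℓ)
        + dist (c₁ u) (c₂ u)
        + 2 * dist (c₁ u) (c₂ u) * Real.exp (dist (c₁ u) (c₂ u)) := by
    intro u hu hdel
    have hev : ∀ᶠ T in atTop, dist (c₁ t) (c₂ t)
        ≤ Real.sqrt (8 * Real.exp (dist (c₁ u) (c₂ u))) *
            Real.exp (t + (dist (c₁ T) (c₂ T) / 2 - T))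
          + dist (c₁ u) (c₂ u)
          + 2 * dist (c₁ u) (c₂ u) * Real.exp (dist (c₁ u) (c₂ u)) := by
      filter_upwards [eventually_ge_atTop (t+1)] with T hT
      exact core_est hgc hcat hc₁ hc₂ hu hdel hT
    have h1 : Tendsto (fun T : ℝ => t + (dist (c₁ T) (c₂ T) / 2 - T)) atTop
        (nhds (t + ℓ)) := tendsto_const_nhds.add hl
    have h2 : Tendsto (fun T : ℝ => Real.exp (t + (dist (c₁ T) (c₂ T) / 2 - T))) atTop
        (nhds (Real.exp (t + ℓ))) := (Real.continuous_exp.tendsto (t + ℓ)).comp h1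
    have htend : Tendsto (fun T : ℝ =>
        Real.sqrt (8 * Real.exp (dist (c₁ u) (c₂ u))) *
            Real.exp (t + (dist (c₁ T) (c₂ T) / 2 - T))
          + dist (c₁ u) (c₂ u)
          + 2 * dist (c₁ u) (c₂ u) * Real.exp (dist (c₁ u) (c₂ u))) atTop
        (nhds (Real.sqrt (8 * Real.exp (dist (c₁ u) (c₂ u))) * Real.exp (t + ℓ)
          + dist (c₁ u) (c₂ u)
          + 2 * dist (c₁ u) (c₂ u) * Real.exp (dist (c₁ u) (c₂ u)))) := by
      exact ((h2.const_mul _).add_const _).add_const _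
    exact ge_of_tendsto htend hev
  have hev2 : ∀ᶠ u in atBot, dist (c₁ t) (c₂ t)
      ≤ Real.sqrt (8 * Real.exp (dist (c₁ u) (c₂ u))) * Real.exp (t + ℓ)
        + dist (c₁ u) (c₂ u)
        + 2 * dist (c₁ u) (c₂ u) * Real.exp (dist (c₁ u) (c₂ u)) := by
    filter_upwards [eventually_le_atBot (t-1), hL3.eventually_le_const (by norm_num : (0:ℝ) < 1)]
      with u h1 h2
    exact stepA u h1 h2
  have hG : Continuous fun d : ℝ =>
      Real.sqrt (8 * Real.exp d) * Real.exp (t + ℓ) + d + 2 * d * Real.exp d := by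
    refine Continuous.add (Continuous.add ?_ continuous_id) ?_
    · exact ((continuous_const.mul Real.continuous_exp).sqrt).mul continuous_const
    · exact (continuous_const.mul continuous_id).mul Real.continuous_exp
  have htend2 : Tendsto (fun u : ℝ =>
      Real.sqrt (8 * Real.exp (dist (c₁ u) (c₂ u))) * Real.exp (t + ℓ)
        + dist (c₁ u) (c₂ u)
        + 2 * dist (c₁ u) (c₂ u) * Real.exp (dist (c₁ u) (c₂ u))) atBot
      (nhds (Real.sqrt (8 * Real.exp 0) * Real.exp (t + ℓ) + 0 + 2 * 0 * Real.exp 0)) :=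
    (hG.tendsto 0).comp hL3
  have hfin := ge_of_tendsto htend2 hev2
  rw [Real.exp_zero, mul_one] at hfin
  calc dist (c₁ t) (c₂ t)
      ≤ Real.sqrt 8 * Real.exp (t + ℓ) + 0 + 2 * 0 * 1 := hfin
    _ = Real.sqrt 8 * Real.exp (t + ℓ) := by ring

end Stmt14Aux

open Filter in
/-- Let `X` be a proper geodesically complete CAT(−1) space and let
`c₁, c₂` be geodesic lines in the same strong unstable set (i.e. `d_{GX}(g_t c₁, g_t c₂) → 0`
as `t → −∞`). Then there is a universal constant `C` (independent of `c₁, c₂`) with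
`d_{GX}(c₁, c₂) ≤ C d⁺(c₁, c₂)`, where the Hamenstädt distance is
`d⁺(c₁, c₂) = exp(lim_{t→∞} (½ d(c₁(t), c₂(t)) − t))` (here `ℓ` denotes that limit). -/
theorem stmt_14 {X : Type*} [MetricSpace X] [ProperSpace X]
    (hgc : GeodesicallyComplete X) (hcat : CATMinusOne X) :
    ∃ C : ℝ, ∀ c₁ c₂ : ℝ → X, Isometry c₁ → Isometry c₂ →
      Tendsto (fun t : ℝ => dGX (geodFlow t c₁) (geodFlow t c₂)) atBot (nhds 0) →
      ∀ ℓ : ℝ, Tendsto (fun t : ℝ => dist (c₁ t) (c₂ t) / 2 - t) atTop (nhds ℓ) →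
        dGX c₁ c₂ ≤ C * Real.exp ℓ := by
  refine ⟨Real.sqrt 8 * ∫ s : ℝ, Real.exp (-|s|), ?_⟩
  intro c₁ c₂ hc₁ hc₂ hunst ℓ hl
  have hpt := fun s => Stmt14Aux.main_pointwise hgc hcat hc₁ hc₂ hunst hl s
  have hint : Integrable (fun s : ℝ => Real.sqrt 8 * Real.exp ℓ * Real.exp (-|s|)) :=
    Stmt14Aux.exp_neg_abs_integrable.const_mul _
  have hmain : dGX c₁ c₂ ≤ ∫ s : ℝ, Real.sqrt 8 * Real.exp ℓ * Real.exp (-|s|) := by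
    unfold dGX
    apply integral_mono_of_nonneg
    · exact Filter.Eventually.of_forall fun s => by positivity
    · exact hint
    · apply Filter.Eventually.of_forall
      intro s
      have h1 := hpt s
      have h2 : s + ℓ + -2 * |s| ≤ ℓ + -|s| := by
        have := le_abs_self s
        linarith
      calc dist (c₁ s) (c₂ s) * Real.exp (-2 * |s|)
          ≤ (Real.sqrt 8 * Real.exp (s + ℓ)) * Real.exp (-2 * |s|) :=
            mul_le_mul_of_nonneg_right h1 (Real.exp_pos _).le
        _ = Real.sqrt 8 * Real.exp (s + ℓ + -2 * |s|) := by
            rw [mul_assoc, ← Real.exp_add]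
        _ ≤ Real.sqrt 8 * Real.exp (ℓ + -|s|) :=
            mul_le_mul_of_nonneg_left (Real.exp_le_exp.mpr h2) (Real.sqrt_nonneg 8)
        _ = Real.sqrt 8 * Real.exp ℓ * Real.exp (-|s|) := by
            rw [Real.exp_add, ← mul_assoc]
  refine le_trans hmain (le_of_eq ?_)
  rw [MeasureTheory.integral_const_mul]
  ring
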